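/- Let n be a positive integer, 1 ≤ r ≤ ⌊n/2⌋, and let σ be a permutation of Fin n which is an involution whose cycle decomposition consists of exactly r transpositions (i.e., σ * σ = 1 and σ.support.card = 2r). Then for every k : ℕ, the number of fixed points of σ^{⊙k} equals ∑_{ℓ=0}^{⌊k/2⌋} multichoose r ℓ * multichoose (n − 2r) (k − 2ℓ). -/

import Mathlib

/-- The `k`-th symmetric tensor power of a permutation `σ` of `Fin n`: the permutation of
`Sym (Fin n) k` sending a multiset `m` to `Sym.map σ m`. -/
def Equiv.Perm.symPow {n : ℕ} (σ : Equiv.Perm (Fin n)) (k : ℕ) :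
    Equiv.Perm (Sym (Fin n) k) :=
  (Sym.equivCongr σ : Sym (Fin n) k ≃ Sym (Fin n) k)

/-- The number of fixed points of a permutation of a finite type. -/
def fixCount {α : Type*} [Fintype α] [DecidableEq α] (τ : Equiv.Perm α) : ℕ :=
  Fintype.card {x : α // τ x = x}

/-- `cycleCount τ s` is the number of cycles of length `s` in the cycle decomposition of `τ`;
for `s = 1` this is the number of fixed points. -/
def cycleCount {α : Type*} [Fintype α] [DecidableEq α] (τ : Equiv.Perm α) (s : ℕ) : ℕ :=
  if s = 1 then fixCount τ
  else (τ.cycleFactorsFinset.filter (fun c => c.support.card = s)).card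

lemma card_sym_finset {α : Type*} [DecidableEq α] (s : Finset α) (ℓ : ℕ) :
    (s.sym ℓ).card = Nat.multichoose s.card ℓ := by
  classical
  rw [← Fintype.card_coe s, ← Sym.card_sym_eq_multichoose {x // x ∈ s} ℓ, Fintype.card]
  refine Finset.card_bij'
    (fun m hm => m.attach.map (fun x => ⟨x.1, Finset.mem_sym_iff.mp hm x.1 x.2⟩))
    (fun b _ => b.map Subtype.val) (fun _ _ => Finset.mem_univ _) ?_ ?_ ?_
  · intro b _
    rw [Finset.mem_sym_iff]
    intro a ha
    rw [Sym.mem_map] at ha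
    obtain ⟨x, -, rfl⟩ := ha
    exact x.2
  · intro m hm
    rw [Sym.map_map]
    exact m.attach_map_coe
  · intro b _
    apply Sym.map_injective Subtype.val_injective
    rw [Sym.map_map]
    exact Sym.attach_map_coe _

/-- The number of fixed points of the symmetric tensor power of an involution consisting of
exactly r transpositions. -/
theorem fixCount_symPow_involution (n r : ℕ) (hn : 0 < n) (hr : 1 ≤ r) (hrn : r ≤ n / 2)
    (σ : Equiv.Perm (Fin n)) (hinv : σ * σ = 1) (hsupp : σ.support.card = 2 * r) (k : ℕ) :
    fixCount (σ.symPow k) =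
      ∑ ℓ ∈ Finset.range (k / 2 + 1),
        Nat.multichoose r ℓ * Nat.multichoose (n - 2 * r) (k - 2 * ℓ) := by
  classical
  have hσ : ∀ x, σ (σ x) = x := fun x => by
    have := congrArg (fun τ : Equiv.Perm (Fin n) => τ x) hinv
    simpa using this
  set R : Finset (Fin n) := Finset.univ.filter (fun x => x < σ x) with hRdef
  set Fs : Finset (Fin n) := Finset.univ.filter (fun x => σ x = x) with hFdef
  -- cardinality of R
  have hR' : Finset.univ.filter (fun x : Fin n => σ x < x) = R.image σ := by
    ext y
    simp only [Finset.mem_filter, Finset.mem_univ, true_and, Finset.mem_image, hRdef]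
    constructor
    · intro h
      refine ⟨σ y, ?_, hσ y⟩
      rw [hσ y]
      exact h
    · rintro ⟨x, hx, rfl⟩
      rw [hσ x]
      exact hx
  have hsupport : σ.support = R ∪ Finset.univ.filter (fun x : Fin n => σ x < x) := by
    ext x
    simp only [Equiv.Perm.mem_support, Finset.mem_union, Finset.mem_filter, Finset.mem_univ,
      true_and, hRdef]
    constructor
    · intro h
      exact lt_or_gt_of_ne (fun hc => h hc.symm)
    · rintro (h | h) <;> exact fun hc => by simp [hc] at h
  have hcardR : R.card = r := by
    have hdisj : Disjoint R (Finset.univ.filter fun x : Fin n => σ x < x) := by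
      rw [Finset.disjoint_left]
      intro a haR haL
      simp only [Finset.mem_filter, Finset.mem_univ, true_and, hRdef] at haR haL
      exact absurd (haR.trans haL) (lt_irrefl a)
    have h1 := Finset.card_union_of_disjoint hdisj
    rw [← hsupport, hsupp, hR', Finset.card_image_of_injective _ σ.injective] at h1
    omega
  have hcardF : Fs.card = n - 2 * r := by
    have hFc : Fs = σ.supportᶜ := by
      ext x
      simp [hFdef, Equiv.Perm.notMem_support]
    rw [hFc, Finset.card_compl, hsupp, Fintype.card_fin]
  -- decomposition of fixed multisets
  have hdecomp : ∀ m : Multiset (Fin n), m.map σ = m →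
      m.filter (fun x => x < σ x) + (m.filter (fun x => x < σ x)).map σ
        + m.filter (fun x => σ x = x) = m := by
    intro m hm
    have hcount : ∀ y, m.count (σ y) = m.count y := by
      intro y
      conv_lhs => rw [← hm]
      exact Multiset.count_map_eq_count' σ m σ.injective y
    rw [Multiset.ext]
    intro y
    have h2 : ((m.filter fun x => x < σ x).map σ).count y
        = (m.filter fun x => x < σ x).count (σ y) := by
      conv_lhs => rw [← hσ y]
      exact Multiset.count_map_eq_count' σ _ σ.injective (σ y)
    rw [Multiset.count_add, Multiset.count_add, h2, Multiset.count_filter,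
      Multiset.count_filter, Multiset.count_filter, hσ y]
    rcases lt_trichotomy y (σ y) with h | h | h
    · rw [if_pos h, if_neg (asymm h), if_neg (ne_of_gt h)]
      omega
    · rw [if_neg (by rw [← h]; exact lt_irrefl y), if_neg (by rw [← h]; exact lt_irrefl y),
        if_pos h.symm]
      omega
    · rw [if_neg (asymm h), if_pos h, if_neg (ne_of_lt h), hcount y]
      omega
  -- fixCount as a filter card
  have hfix : fixCount (σ.symPow k)
      = (Finset.univ.filter fun m : Sym (Fin n) k =>
          Multiset.map σ (↑m : Multiset (Fin n)) = ↑m).card := by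
    rw [fixCount, Fintype.card_subtype]
    congr 1
    ext m
    simp only [Finset.mem_filter, Finset.mem_univ, true_and]
    constructor
    · intro h
      have : (↑(σ.symPow k m) : Multiset (Fin n)) = ↑m := by rw [h]
      rwa [show σ.symPow k m = Sym.map σ m from rfl, Sym.coe_map] at this
    · intro h
      show Sym.map σ m = m
      exact Sym.coe_injective (by rwa [Sym.coe_map])
  rw [hfix]
  have hfiber : ∀ m ∈ (Finset.univ.filter fun m : Sym (Fin n) k =>
      Multiset.map σ (↑m : Multiset (Fin n)) = ↑m),
      Multiset.card (Multiset.filter (fun x => x < σ x) ↑m) ∈ Finset.range (k / 2 + 1) := by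
    intro m hm
    simp only [Finset.mem_filter, Finset.mem_univ, true_and] at hm
    have hdm := congrArg Multiset.card (hdecomp ↑m hm)
    rw [Multiset.card_add, Multiset.card_add, Multiset.card_map] at hdm
    have hck : Multiset.card (↑m : Multiset (Fin n)) = k := m.2
    rw [Finset.mem_range]
    omega
  rw [Finset.card_eq_sum_card_fiberwise hfiber]
  refine Finset.sum_congr rfl ?_
  intro ℓ hℓ
  rw [Finset.mem_range] at hℓ
  have h2ℓ : 2 * ℓ ≤ k := by
    have := Nat.div_mul_le_self k 2
    omega
  rw [← hcardF, ← hcardR, ← card_sym_finset, ← card_sym_finset, ← Finset.card_product]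
  refine Finset.card_bij'
    (fun m hm => (⟨Multiset.filter (fun x => x < σ x) ↑m, by
        simp only [Finset.mem_filter] at hm; exact hm.2⟩,
      ⟨Multiset.filter (fun x => σ x = x) ↑m, by
        simp only [Finset.mem_filter, Finset.mem_univ, true_and] at hm
        have hdm := congrArg Multiset.card (hdecomp ↑m hm.1)
        rw [Multiset.card_add, Multiset.card_add, Multiset.card_map] at hdm
        have hck : Multiset.card (↑m : Multiset (Fin n)) = k := m.2
        have hcl := hm.2
        omega⟩))
    (fun ab hab => ⟨(↑ab.1 : Multiset (Fin n)) + Multiset.map σ ↑ab.1 + ↑ab.2, by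
        rw [Multiset.card_add, Multiset.card_add, Multiset.card_map]
        have h1 : Multiset.card (↑ab.1 : Multiset (Fin n)) = ℓ := ab.1.2
        have h2 : Multiset.card (↑ab.2 : Multiset (Fin n)) = k - 2 * ℓ := ab.2.2
        omega⟩)
    ?_ ?_ ?_ ?_
  · -- i maps into the product
    intro m hm
    simp only [Finset.mem_filter, Finset.mem_univ, true_and] at hm
    rw [Finset.mem_product]
    constructor
    · rw [Finset.mem_sym_iff]
      intro a ha
      rw [Sym.mem_mk, Multiset.mem_filter] at ha
      simp only [hRdef, Finset.mem_filter, Finset.mem_univ, true_and]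
      exact ha.2
    · rw [Finset.mem_sym_iff]
      intro a ha
      rw [Sym.mem_mk, Multiset.mem_filter] at ha
      simp only [hFdef, Finset.mem_filter, Finset.mem_univ, true_and]
      exact ha.2
  · -- j maps into the fiber
    intro ab hab
    rw [Finset.mem_product, Finset.mem_sym_iff, Finset.mem_sym_iff] at hab
    obtain ⟨ha, hb⟩ := hab
    have haR : ∀ x ∈ (↑ab.1 : Multiset (Fin n)), x < σ x := by
      intro x hx
      have := ha x hx
      simpa [hRdef] using this
    have hbF : ∀ x ∈ (↑ab.2 : Multiset (Fin n)), σ x = x := by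
      intro x hx
      have := hb x hx
      simpa [hFdef] using this
    refine Finset.mem_filter.2 ⟨Finset.mem_filter.2 ⟨Finset.mem_univ _, ?_⟩, ?_⟩
    · -- fixedness
      show Multiset.map σ ((↑ab.1 : Multiset (Fin n)) + Multiset.map σ ↑ab.1 + ↑ab.2) = _
      rw [Multiset.map_add, Multiset.map_add, Multiset.map_map]
      have e1 : Multiset.map (σ ∘ σ) (↑ab.1 : Multiset (Fin n)) = ↑ab.1 :=
        (Multiset.map_congr rfl (fun x _ => hσ x)).trans (Multiset.map_id' _)
      have e2 : Multiset.map σ (↑ab.2 : Multiset (Fin n)) = ↑ab.2 :=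
        (Multiset.map_congr rfl (fun x hx => hbF x hx)).trans (Multiset.map_id' _)
      show _ = (↑ab.1 : Multiset (Fin n)) + Multiset.map σ ↑ab.1 + ↑ab.2
      rw [e1, e2, add_comm (Multiset.map σ (↑ab.1 : Multiset (Fin n))) (↑ab.1 : Multiset (Fin n))]
    · -- filter card
      show Multiset.card (Multiset.filter _ ((↑ab.1 : Multiset (Fin n))
        + Multiset.map σ ↑ab.1 + (↑ab.2 : Multiset (Fin n)))) = ℓ
      rw [Multiset.filter_add, Multiset.filter_add,
        Multiset.filter_eq_self.2 haR,
        Multiset.filter_eq_nil.2 (by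
          intro a hamem
          rw [Multiset.mem_map] at hamem
          obtain ⟨x, hx, rfl⟩ := hamem
          rw [hσ x]
          exact asymm (haR x hx)),
        Multiset.filter_eq_nil.2 (by
          intro a hamem
          rw [hbF a hamem]
          exact lt_irrefl a)]
      rw [add_zero, add_zero]
      exact ab.1.2
  · -- left inverse
    intro m hm
    simp only [Finset.mem_filter, Finset.mem_univ, true_and] at hm
    exact Sym.coe_injective (hdecomp ↑m hm.1)
  · -- right inverse
    intro ab hab
    rw [Finset.mem_product, Finset.mem_sym_iff, Finset.mem_sym_iff] at hab
    obtain ⟨ha, hb⟩ := hab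
    have haR : ∀ x ∈ (↑ab.1 : Multiset (Fin n)), x < σ x := by
      intro x hx
      have := ha x hx
      simpa [hRdef] using this
    have hbF : ∀ x ∈ (↑ab.2 : Multiset (Fin n)), σ x = x := by
      intro x hx
      have := hb x hx
      simpa [hFdef] using this
    have hfa : Multiset.filter (fun x => x < σ x)
        ((↑ab.1 : Multiset (Fin n)) + Multiset.map σ ↑ab.1 + ↑ab.2) = ↑ab.1 := by
      rw [Multiset.filter_add, Multiset.filter_add,
        Multiset.filter_eq_self.2 haR,
        Multiset.filter_eq_nil.2 (by
          intro a hamem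
          rw [Multiset.mem_map] at hamem
          obtain ⟨x, hx, rfl⟩ := hamem
          rw [hσ x]
          exact asymm (haR x hx)),
        Multiset.filter_eq_nil.2 (by
          intro a hamem
          rw [hbF a hamem]
          exact lt_irrefl a), add_zero, add_zero]
    have hfb : Multiset.filter (fun x => σ x = x)
        ((↑ab.1 : Multiset (Fin n)) + Multiset.map σ ↑ab.1 + ↑ab.2) = ↑ab.2 := by
      rw [Multiset.filter_add, Multiset.filter_add,
        Multiset.filter_eq_self.2 hbF,
        Multiset.filter_eq_nil.2 (by
          intro a hamem
          exact (haR a hamem).ne'),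
        Multiset.filter_eq_nil.2 (by
          intro a hamem
          rw [Multiset.mem_map] at hamem
          obtain ⟨x, hx, rfl⟩ := hamem
          rw [hσ x]
          exact (haR x hx).ne), zero_add, zero_add]
    ext : 1
    · exact Sym.coe_injective hfa
    · exact Sym.coe_injective hfb
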